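/- arXiv:1710.08467 — 2 statements merged into one kernel-verified Lean document; each statement's English description precedes it below -/
import Mathlib

section
/- Let Z be a nonnegative random variable with E[log(1+Z)] < ∞. Then E[log(1+Z)] = ∫₀^∞ (1 − e^{−s}) · E[e^{−s/Z}] / s ds, where on the event {Z = 0} the integrand contribution E[e^{−s/Z}] is interpreted as 0 (i.e., e^{−s/0} := 0). -/
open MeasureTheory Real


lemma stepA (t : ℝ) (ht : 0 < t) : ∫ s in Set.Ioi (0:ℝ), exp (-(t*s)) = 1/t := by
  have h := integral_comp_mul_left_Ioi (fun x => exp (-x)) 0 ht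
  simp only [mul_zero, integral_exp_neg_Ioi, neg_zero, exp_zero, smul_eq_mul, mul_one] at h
  rw [h]; ring

lemma stepB (a b s : ℝ) (hs : 0 < s) (hab : a ≤ b) :
    ∫ t in Set.Ioc a b, exp (-(t*s)) = (exp (-(a*s)) - exp (-(b*s)))/s := by
  rw [← intervalIntegral.integral_of_le hab]
  have hd : ∀ t ∈ Set.uIcc a b, HasDerivAt (fun t => -(exp (-(t*s)))/s) (exp (-(t*s))) t := by
    intro t _
    have h1 : HasDerivAt (fun t : ℝ => -(t*s)) (-s) t := by
      have := ((hasDerivAt_id' t).mul_const s).neg; rw [one_mul] at this; exact this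
    have h2 := (h1.exp).neg.div_const s
    refine h2.congr_deriv ?_
    rw [mul_neg, neg_neg, mul_div_assoc, div_self hs.ne', mul_one]
  rw [intervalIntegral.integral_eq_sub_of_hasDerivAt hd
    (Continuous.intervalIntegrable (by continuity) a b)]
  ring

lemma frullani (z : ℝ) (hz : 0 < z) :
    ∫⁻ s in Set.Ioi (0:ℝ), ENNReal.ofReal ((1 - exp (-s)) * exp (-(s/z)) / s)
      = ENNReal.ofReal (Real.log (1+z)) := by
  set a : ℝ := z⁻¹ with ha
  set b : ℝ := 1 + z⁻¹ with hb
  have ha0 : 0 < a := by positivity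
  have hab : a ≤ b := by simp [ha, hb]
  have h1 : ∫⁻ s in Set.Ioi (0:ℝ), ENNReal.ofReal ((1 - exp (-s)) * exp (-(s/z)) / s)
      = ∫⁻ s in Set.Ioi (0:ℝ), ∫⁻ t in Set.Ioc a b, ENNReal.ofReal (exp (-(t*s))) := by
    apply setLIntegral_congr_fun measurableSet_Ioi
    intro s hs; dsimp only
    have hint1 : IntegrableOn (fun t : ℝ => exp (-(t*s))) (Set.Ioc a b) :=
      (Continuous.integrableOn_Icc (by continuity)).mono_set Set.Ioc_subset_Icc_self
    rw [← ofReal_integral_eq_lintegral_ofReal hint1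
      (Filter.Eventually.of_forall fun t => (exp_pos _).le)]
    rw [stepB a b s hs hab]
    congr 1
    have hbs : exp (-(b*s)) = exp (-s) * exp (-(a*s)) := by
      rw [← exp_add, hb, ha]; ring_nf
    have has : exp (-(s/z)) = exp (-(a*s)) := by
      rw [div_eq_mul_inv, ha]; ring_nf
    rw [hbs, has]; ring
  rw [h1, lintegral_lintegral_swap (by fun_prop)]
  have h2 : ∫⁻ t in Set.Ioc a b, ∫⁻ s in Set.Ioi (0:ℝ), ENNReal.ofReal (exp (-(t*s)))
      = ∫⁻ t in Set.Ioc a b, ENNReal.ofReal (1/t) := by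
    apply setLIntegral_congr_fun measurableSet_Ioc
    intro t ht; dsimp only
    have ht0 : 0 < t := ha0.trans ht.1
    have hint2 : IntegrableOn (fun s : ℝ => exp (-(t*s))) (Set.Ioi (0:ℝ)) := by
      simpa [neg_mul] using exp_neg_integrableOn_Ioi 0 ht0
    rw [← ofReal_integral_eq_lintegral_ofReal hint2
      (Filter.Eventually.of_forall fun s => (exp_pos _).le), stepA t ht0]
  rw [h2, ← ofReal_integral_eq_lintegral_ofReal]
  · congr 1
    rw [← intervalIntegral.integral_of_le hab, integral_one_div (by
      intro h
      rcases Set.mem_uIcc.1 h with ⟨h1, _⟩ | ⟨h2, _⟩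
      · exact absurd h1 (not_le.2 ha0)
      · exact absurd h2 (not_le.2 (ha0.trans_le hab)))]
    congr 1
    rw [hb, ha]
    field_simp [hz.ne']
    ring
  · exact ((continuousOn_const.div continuousOn_id
      (fun t ht => (ha0.trans_le ht.1).ne'))).integrableOn_Icc.mono_set Set.Ioc_subset_Icc_self
  · filter_upwards [ae_restrict_mem measurableSet_Ioc] with t ht
    exact (one_div_pos.2 (ha0.trans ht.1)).le

/-- Shannon-transform integral identity: for a nonnegative random variable `Z`
with `E[log(1+Z)] < ∞`,
`E[log(1+Z)] = ∫₀^∞ (1 − e^{−s}) · E[e^{−s/Z}] / s ds`, where `e^{−s/Z} := 0` on `{Z = 0}`. -/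
theorem stmt8
    {Ω : Type*} [MeasurableSpace Ω] {μ : Measure Ω} [IsProbabilityMeasure μ]
    (Z : Ω → ℝ) (hZmeas : Measurable Z) (hZnonneg : ∀ ω, 0 ≤ Z ω)
    (hint : Integrable (fun ω => Real.log (1 + Z ω)) μ) :
    ∫ ω, Real.log (1 + Z ω) ∂μ
      = ∫ s in Set.Ioi (0:ℝ),
          (1 - Real.exp (-s)) * (∫ ω, (if 0 < Z ω then Real.exp (-(s / Z ω)) else 0) ∂μ) / s := by
  set g : ℝ → Ω → ℝ := fun s ω => if 0 < Z ω then Real.exp (-(s / Z ω)) else 0 with hg_def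
  have hg_meas : Measurable (fun p : ℝ × Ω => g p.1 p.2) := by
    apply Measurable.ite (measurableSet_lt measurable_const (hZmeas.comp measurable_snd))
    · exact Real.measurable_exp.comp ((measurable_fst.div (hZmeas.comp measurable_snd)).neg)
    · exact measurable_const
  have hg_meas1 : ∀ s : ℝ, Measurable (g s) := fun s =>
    hg_meas.comp (measurable_const.prodMk measurable_id)
  have hg_nonneg : ∀ s ω, 0 ≤ g s ω := by
    intro s ω; rw [hg_def]; dsimp only; split
    · exact (exp_pos _).le
    · exact le_rfl
  have hg_le_one : ∀ s, 0 ≤ s → ∀ ω, g s ω ≤ 1 := by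
    intro s hs ω; rw [hg_def]; dsimp only; split
    · rename_i hz
      exact exp_le_one_iff.2 (neg_nonpos.2 (div_nonneg hs (hZnonneg ω)))
    · exact zero_le_one
  have hg_int : ∀ s, 0 ≤ s → Integrable (g s) μ := by
    intro s hs
    refine Integrable.mono' (integrable_const 1)
      (hg_meas1 s).aestronglyMeasurable
      (Filter.Eventually.of_forall fun ω => ?_)
    rw [Real.norm_eq_abs, abs_of_nonneg (hg_nonneg s ω)]; exact hg_le_one s hs ω
  set G : ℝ → ℝ := fun s => ∫ ω, g s ω ∂μ with hG_def
  have hG_nonneg : ∀ s, 0 ≤ G s := fun s => integral_nonneg (hg_nonneg s)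
  have hG_meas : StronglyMeasurable G :=
    (hg_meas.stronglyMeasurable).integral_prod_right'
  set h : ℝ → ℝ := fun s => (1 - Real.exp (-s)) * G s / s with hh_def
  have hh_meas : AEStronglyMeasurable h (volume.restrict (Set.Ioi (0:ℝ))) := by
    apply Measurable.aestronglyMeasurable
    exact (((measurable_const.sub (Real.measurable_exp.comp measurable_neg)).mul
      hG_meas.measurable).div measurable_id)
  have hh_nonneg : 0 ≤ᵐ[volume.restrict (Set.Ioi (0:ℝ))] h := by
    filter_upwards [ae_restrict_mem measurableSet_Ioi] with s hs
    have h1 : 0 ≤ 1 - Real.exp (-s) := by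
      simp only [sub_nonneg]; exact exp_le_one_iff.2 (by simp; exact (Set.mem_Ioi.1 hs).le)
    exact div_nonneg (mul_nonneg h1 (hG_nonneg s)) (Set.mem_Ioi.1 hs).le
  have key : ∫⁻ s in Set.Ioi (0:ℝ), ENNReal.ofReal (h s)
      = ENNReal.ofReal (∫ ω, Real.log (1 + Z ω) ∂μ) := by
    have e1 : ∫⁻ s in Set.Ioi (0:ℝ), ENNReal.ofReal (h s)
        = ∫⁻ s in Set.Ioi (0:ℝ), ∫⁻ ω, ENNReal.ofReal ((1 - Real.exp (-s))/s * g s ω) ∂μ := by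
      apply setLIntegral_congr_fun measurableSet_Ioi
      intro s hs; dsimp only
      have hs0 : 0 < s := Set.mem_Ioi.1 hs
      have hc : 0 ≤ (1 - Real.exp (-s))/s := by
        apply div_nonneg _ hs0.le
        simp only [sub_nonneg]; exact exp_le_one_iff.2 (by simpa using hs0.le)
      have hofg : Measurable fun ω => ENNReal.ofReal (g s ω) :=
        ENNReal.measurable_ofReal.comp (hg_meas1 s)
      have step : ENNReal.ofReal (h s)
          = ENNReal.ofReal ((1 - Real.exp (-s))/s) * ENNReal.ofReal (G s) := by
        rw [← ENNReal.ofReal_mul hc, hh_def]; congr 1; ring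
      rw [step, hG_def, ofReal_integral_eq_lintegral_ofReal (hg_int s hs0.le)
        (Filter.Eventually.of_forall (hg_nonneg s)),
        ← lintegral_const_mul _ hofg]
      apply lintegral_congr fun ω => ?_
      rw [← ENNReal.ofReal_mul hc]
    have e2 : ∫⁻ s in Set.Ioi (0:ℝ), ∫⁻ ω, ENNReal.ofReal ((1 - Real.exp (-s))/s * g s ω) ∂μ
        = ∫⁻ ω, (∫⁻ s in Set.Ioi (0:ℝ), ENNReal.ofReal ((1 - Real.exp (-s))/s * g s ω)) ∂μ := by
      apply lintegral_lintegral_swap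
      apply Measurable.aemeasurable
      exact ENNReal.measurable_ofReal.comp
        ((((measurable_const.sub (Real.measurable_exp.comp measurable_neg)).comp measurable_fst
          ).div measurable_fst).mul hg_meas)
    have e3 : ∫⁻ ω, (∫⁻ s in Set.Ioi (0:ℝ), ENNReal.ofReal ((1 - Real.exp (-s))/s * g s ω)) ∂μ
        = ∫⁻ ω, ENNReal.ofReal (Real.log (1 + Z ω)) ∂μ := by
      apply lintegral_congr fun ω => ?_
      rcases lt_or_eq_of_le (hZnonneg ω) with hpos | hzero
      · have hfun : ∀ s : ℝ, (1 - Real.exp (-s))/s * g s ω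
            = (1 - Real.exp (-s)) * Real.exp (-(s / Z ω)) / s := by
          intro s; rw [hg_def]; dsimp only; rw [if_pos hpos]; ring
        simp_rw [hfun]
        exact frullani (Z ω) hpos
      · have hfun : ∀ s : ℝ, (1 - Real.exp (-s))/s * g s ω = 0 := by
          intro s; rw [hg_def]; dsimp only; rw [if_neg (by rw [← hzero]; exact lt_irrefl 0)]; ring
        simp_rw [hfun]
        simp [← hzero]
    rw [e1, e2, e3, ← ofReal_integral_eq_lintegral_ofReal hint]
    filter_upwards with ω
    exact Real.log_nonneg (by linarith [hZnonneg ω])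
  rw [show (∫ s in Set.Ioi (0:ℝ),
      (1 - Real.exp (-s)) * (∫ ω, (if 0 < Z ω then Real.exp (-(s / Z ω)) else 0) ∂μ) / s)
      = ∫ s in Set.Ioi (0:ℝ), h s from rfl,
    integral_eq_lintegral_of_nonneg_ae hh_nonneg hh_meas, key,
    ENNReal.toReal_ofReal (integral_nonneg fun ω => Real.log_nonneg (by linarith [hZnonneg ω]))]
end

section
/- Let Z be a nonnegative random variable and H a nonnegative random variable independent of Z, with E[log(1 + H·Z)] < ∞. Then E[log(1 + H Z)] = ∫₀^∞ (1 − L_H(s)) · L_{1/Z}(s) / s ds, where L_H(s) = E[e^{−sH}] and L_{1/Z}(s) = E[e^{−s/Z}] (with e^{−s/0} := 0). -/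
open MeasureTheory Real ProbabilityTheory

section AuxShannon

open Set


lemma aux_interval {t : ℝ} (ht : 0 < t) (a b : ℝ) :
    ∫ u in a..b, Real.exp (-(u*t)) = (Real.exp (-(a*t)) - Real.exp (-(b*t)))/t := by
  have hderiv : ∀ u ∈ Set.uIcc a b,
      HasDerivAt (fun u => -(Real.exp (-(u*t))/t)) (Real.exp (-(u*t))) u := by
    intro u _
    have h1 : HasDerivAt (fun u : ℝ => -(u*t)) (-(1*t)) u :=
      ((hasDerivAt_id u).mul_const t).neg
    have h2 : HasDerivAt (fun u => -(Real.exp (-(u*t))/t)) (-(Real.exp (-(u*t)) * -(1*t) / t)) u :=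
      (h1.exp.div_const t).neg
    convert h2 using 1
    rw [mul_neg, one_mul, neg_div, neg_neg, mul_div_assoc, div_self ht.ne', mul_one]
  rw [intervalIntegral.integral_eq_sub_of_hasDerivAt hderiv
    (Continuous.intervalIntegrable (by continuity) a b)]
  field_simp
  ring

lemma aux_exp_lintegral {u : ℝ} (hu : 0 < u) :
    ∫⁻ t in Set.Ioi (0:ℝ), ENNReal.ofReal (Real.exp (-(u*t))) = ENNReal.ofReal (1/u) := by
  rw [← ofReal_integral_eq_lintegral_ofReal]
  · congr 1
    have h := MeasureTheory.integral_comp_mul_left_Ioi (fun x => Real.exp (-x)) 0 hu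
    simp only [mul_zero] at h
    rw [h, integral_exp_neg_Ioi_zero]
    simp [one_div]
  · exact (exp_neg_integrableOn_Ioi 0 hu).congr_fun (fun x _ => by simp only [neg_mul]) measurableSet_Ioi
  · exact Filter.Eventually.of_forall fun t => (Real.exp_pos _).le

lemma aux_frullani {a b : ℝ} (ha : 0 < a) (hab : a ≤ b) :
    ∫⁻ t in Set.Ioi (0:ℝ),
        ENNReal.ofReal ((Real.exp (-(a*t)) - Real.exp (-(b*t)))/t)
      = ENNReal.ofReal (Real.log (b/a)) := by
  have hb : 0 < b := lt_of_lt_of_le ha hab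
  calc ∫⁻ t in Set.Ioi (0:ℝ), ENNReal.ofReal ((Real.exp (-(a*t)) - Real.exp (-(b*t)))/t)
      = ∫⁻ t in Set.Ioi (0:ℝ), ∫⁻ u in Set.Ioc a b, ENNReal.ofReal (Real.exp (-(u*t))) := by
        refine setLIntegral_congr_fun measurableSet_Ioi ?_
        intro t ht
        dsimp only
        rw [← ofReal_integral_eq_lintegral_ofReal, ← intervalIntegral.integral_of_le hab,
          aux_interval ht]
        · exact ((Real.continuous_exp.comp (by continuity)).integrableOn_Ioc)
        · exact Filter.Eventually.of_forall fun u => (Real.exp_pos _).le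
    _ = ∫⁻ u in Set.Ioc a b, ∫⁻ t in Set.Ioi (0:ℝ), ENNReal.ofReal (Real.exp (-(u*t))) := by
        refine lintegral_lintegral_swap ?_
        exact ((measurable_snd.mul measurable_fst).neg.exp.ennreal_ofReal).aemeasurable
    _ = ∫⁻ u in Set.Ioc a b, ENNReal.ofReal (1/u) := by
        refine setLIntegral_congr_fun measurableSet_Ioc ?_
        intro u hu
        exact aux_exp_lintegral (lt_of_lt_of_le ha hu.1.le)
    _ = ENNReal.ofReal (Real.log (b/a)) := by
        rw [← ofReal_integral_eq_lintegral_ofReal, ← intervalIntegral.integral_of_le hab,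
          integral_one_div_of_pos ha hb]
        · exact ((intervalIntegral.intervalIntegrable_one_div (f := id) (fun x hx => by
            rw [Set.uIcc_of_le hab] at hx; exact ne_of_gt (lt_of_lt_of_le ha hx.1))
            continuousOn_id).1).congr_fun (fun x _ => rfl) measurableSet_Ioc
        · refine ae_restrict_of_forall_mem measurableSet_Ioc ?_
          intro u hu
          have : (0:ℝ) < u := ha.trans hu.1
          positivity

lemma aux_pointwise {h z : ℝ} (hh : 0 ≤ h) (hz : 0 ≤ z) :
    ∫⁻ s in Set.Ioi (0:ℝ),
        ENNReal.ofReal ((1 - Real.exp (-(s*h))) * (if 0 < z then Real.exp (-(s/z)) else 0) / s)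
      = ENNReal.ofReal (Real.log (1 + h*z)) := by
  rcases hz.eq_or_lt with rfl | hz
  · simp
  · have key : ∫⁻ s in Set.Ioi (0:ℝ),
        ENNReal.ofReal ((1 - Real.exp (-(s*h))) * (if 0 < z then Real.exp (-(s/z)) else 0) / s)
        = ∫⁻ s in Set.Ioi (0:ℝ),
        ENNReal.ofReal ((Real.exp (-(z⁻¹*s)) - Real.exp (-((z⁻¹+h)*s)))/s) := by
      refine setLIntegral_congr_fun measurableSet_Ioi ?_
      intro s hs
      dsimp only
      rw [if_pos hz]
      congr 1
      rw [sub_mul, one_mul, ← Real.exp_add]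
      congr 2
      · field_simp
      · field_simp
        ring
    rw [key, aux_frullani (by positivity) (le_add_of_nonneg_right hh)]
    congr 1
    rw [div_eq_mul_inv, inv_inv, add_mul]
    congr 2
    · rw [inv_mul_cancel₀ (ne_of_gt hz)]

end AuxShannon

/-- General Shannon-transform identity: for nonnegative independent random
variables `Z` and `H` with `E[log(1+H·Z)] < ∞`,
`E[log(1 + H Z)] = ∫₀^∞ (1 − L_H(s)) · L_{1/Z}(s) / s ds`, where `L_H(s) = E[e^{−sH}]`
and `L_{1/Z}(s) = E[e^{−s/Z}]` with `e^{−s/0} := 0`. -/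
theorem stmt9
    {Ω : Type*} [MeasurableSpace Ω] {μ : Measure Ω} [IsProbabilityMeasure μ]
    (Z H : Ω → ℝ) (hZmeas : Measurable Z) (hHmeas : Measurable H)
    (hZnonneg : ∀ ω, 0 ≤ Z ω) (hHnonneg : ∀ ω, 0 ≤ H ω)
    (hindep : IndepFun H Z μ)
    (hint : Integrable (fun ω => Real.log (1 + H ω * Z ω)) μ) :
    ∫ ω, Real.log (1 + H ω * Z ω) ∂μ
      = ∫ s in Set.Ioi (0:ℝ),
          (1 - ∫ ω, Real.exp (-(s * H ω)) ∂μ)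
            * (∫ ω, (if 0 < Z ω then Real.exp (-(s / Z ω)) else 0) ∂μ) / s := by
  set F : ℝ → Ω → ℝ := fun s ω =>
    (1 - Real.exp (-(s * H ω))) * (if 0 < Z ω then Real.exp (-(s / Z ω)) else 0) / s with hF
  set G : ℝ → ℝ := fun s =>
    (1 - ∫ ω, Real.exp (-(s * H ω)) ∂μ)
      * (∫ ω, (if 0 < Z ω then Real.exp (-(s / Z ω)) else 0) ∂μ) / s with hG
  -- measurability of uncurried F
  have hFmeas : Measurable (fun p : ℝ × Ω => F p.1 p.2) := by
    apply Measurable.div _ measurable_fst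
    apply Measurable.mul
    · exact (measurable_const.sub ((measurable_fst.mul
        (hHmeas.comp measurable_snd)).neg.exp))
    · exact Measurable.ite (measurableSet_lt measurable_const (hZmeas.comp measurable_snd))
        ((measurable_fst.div (hZmeas.comp measurable_snd)).neg.exp) measurable_const
  -- integrability of exp factor for fixed s ≥ 0
  have hexp_int : ∀ s : ℝ, 0 ≤ s → Integrable (fun ω => Real.exp (-(s * H ω))) μ := by
    intro s hs
    refine (integrable_const (1:ℝ)).mono' ((hHmeas.const_mul s).neg.exp.aestronglyMeasurable)
      (Filter.Eventually.of_forall fun ω => ?_)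
    rw [Real.norm_eq_abs, abs_of_pos (Real.exp_pos _)]
    exact Real.exp_le_one_iff.2 (neg_nonpos.2 (mul_nonneg hs (hHnonneg ω)))
  have hgmeas : ∀ s : ℝ, Measurable (fun x : ℝ => if 0 < x then Real.exp (-(s / x)) else 0) :=
    fun s => Measurable.ite (measurableSet_lt measurable_const measurable_id)
      ((measurable_const.div measurable_id).neg.exp) measurable_const
  -- inner identity for s > 0
  have inner_eq : ∀ s ∈ Set.Ioi (0:ℝ),
      ∫⁻ ω, ENNReal.ofReal (F s ω) ∂μ = ENNReal.ofReal (G s) := by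
    intro s hs
    have hs' : (0:ℝ) < s := hs
    set f : ℝ → ℝ := fun x => 1 - Real.exp (-(s * x)) with hfdef
    set g : ℝ → ℝ := fun x => if 0 < x then Real.exp (-(s / x)) else 0 with hgdef
    have hfm : Measurable f := measurable_const.sub ((measurable_id.const_mul s).neg.exp)
    have hgm : Measurable g := hgmeas s
    have hf01 : ∀ x, 0 ≤ x → 0 ≤ f x ∧ f x ≤ 1 := by
      intro x hx
      constructor
      · simp only [hfdef, sub_nonneg]
        exact Real.exp_le_one_iff.2 (neg_nonpos.2 (mul_nonneg hs'.le hx))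
      · simp only [hfdef, sub_le_self_iff]
        exact (Real.exp_pos _).le
    have hg01 : ∀ x, 0 ≤ g x ∧ g x ≤ 1 := by
      intro x
      simp only [hgdef]
      split_ifs with hx
      · exact ⟨(Real.exp_pos _).le,
          Real.exp_le_one_iff.2 (neg_nonpos.2 (div_nonneg hs'.le hx.le))⟩
      · exact ⟨le_refl 0, zero_le_one⟩
    have hfint : Integrable (fun ω => f (H ω)) μ := by
      refine (integrable_const (1:ℝ)).mono' (hfm.comp hHmeas).aestronglyMeasurable
        (Filter.Eventually.of_forall fun ω => ?_)
      rw [Real.norm_eq_abs, abs_of_nonneg (hf01 _ (hHnonneg ω)).1]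
      exact (hf01 _ (hHnonneg ω)).2
    have hgint : Integrable (fun ω => g (Z ω)) μ := by
      refine (integrable_const (1:ℝ)).mono' (hgm.comp hZmeas).aestronglyMeasurable
        (Filter.Eventually.of_forall fun ω => ?_)
      rw [Real.norm_eq_abs, abs_of_nonneg (hg01 _).1]
      exact (hg01 _).2
    have hFsint : Integrable (F s) μ := by
      have : Integrable (fun ω => f (H ω) * g (Z ω)) μ :=
        (hindep.comp hfm hgm).integrable_mul hfint hgint
      exact this.div_const s
    have hFsnn : 0 ≤ᵐ[μ] F s := Filter.Eventually.of_forall fun ω => by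
      exact div_nonneg (mul_nonneg (hf01 _ (hHnonneg ω)).1 (hg01 _).1) hs'.le
    rw [← ofReal_integral_eq_lintegral_ofReal hFsint hFsnn]
    congr 1
    have : ∫ ω, F s ω ∂μ = (∫ ω, f (H ω) * g (Z ω) ∂μ) / s := by
      simp only [hF]
      rw [integral_div]
    have hmul := (hindep.comp hfm hgm).integral_fun_mul_eq_mul_integral (hfm.comp hHmeas).aestronglyMeasurable
      (hgm.comp hZmeas).aestronglyMeasurable
    simp only [Function.comp_def] at hmul
    have hf_split : ∫ ω, f (H ω) ∂μ = 1 - ∫ ω, Real.exp (-(s * H ω)) ∂μ := by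
      rw [integral_sub (integrable_const 1) (hexp_int s hs'.le)]
      simp
    rw [this, hmul, hf_split]
  -- the key lintegral identity
  have key : ∫⁻ ω, ENNReal.ofReal (Real.log (1 + H ω * Z ω)) ∂μ
      = ∫⁻ s in Set.Ioi (0:ℝ), ENNReal.ofReal (G s) := by
    calc ∫⁻ ω, ENNReal.ofReal (Real.log (1 + H ω * Z ω)) ∂μ
        = ∫⁻ ω, (∫⁻ s in Set.Ioi (0:ℝ), ENNReal.ofReal (F s ω)) ∂μ := by
          refine lintegral_congr fun ω => ?_
          exact (aux_pointwise (hHnonneg ω) (hZnonneg ω)).symm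
      _ = ∫⁻ s in Set.Ioi (0:ℝ), ∫⁻ ω, ENNReal.ofReal (F s ω) ∂μ := by
          refine (lintegral_lintegral_swap ?_).symm
          exact (hFmeas.ennreal_ofReal).aemeasurable
      _ = ∫⁻ s in Set.Ioi (0:ℝ), ENNReal.ofReal (G s) :=
          setLIntegral_congr_fun measurableSet_Ioi inner_eq
  -- nonnegativity of G on Ioi 0
  have hGnn : ∀ s ∈ Set.Ioi (0:ℝ), 0 ≤ G s := by
    intro s hs
    have hs' : (0:ℝ) < s := hs
    have h1 : ∫ ω, Real.exp (-(s * H ω)) ∂μ ≤ 1 := by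
      calc ∫ ω, Real.exp (-(s * H ω)) ∂μ ≤ ∫ _ω, (1:ℝ) ∂μ := by
            refine integral_mono (hexp_int s hs'.le) (integrable_const 1) fun ω => ?_
            exact Real.exp_le_one_iff.2 (neg_nonpos.2 (mul_nonneg hs'.le (hHnonneg ω)))
        _ = 1 := by simp
    have h2 : 0 ≤ ∫ ω, (if 0 < Z ω then Real.exp (-(s / Z ω)) else 0) ∂μ := by
      refine integral_nonneg fun ω => ?_
      split_ifs
      · exact (Real.exp_pos _).le
      · exact le_refl 0
    exact div_nonneg (mul_nonneg (sub_nonneg.2 h1) h2) hs'.le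
  -- measurability of G (a.e. on Ioi 0)
  have hGaem : AEMeasurable G (volume.restrict (Set.Ioi (0:ℝ))) := by
    have hmeas' : Measurable fun s => ∫⁻ ω, ENNReal.ofReal (F s ω) ∂μ :=
      Measurable.lintegral_prod_right (hFmeas.ennreal_ofReal)
    refine (hmeas'.ennreal_toReal.aemeasurable).congr ?_
    refine (ae_restrict_iff' measurableSet_Ioi).2 (Filter.Eventually.of_forall fun s hs => ?_)
    dsimp only
    rw [inner_eq s hs, ENNReal.toReal_ofReal (hGnn s hs)]
  -- conclude
  rw [integral_eq_lintegral_of_nonneg_ae (f := fun ω => Real.log (1 + H ω * Z ω))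
      (Filter.Eventually.of_forall fun ω => Real.log_nonneg (by nlinarith [hHnonneg ω, hZnonneg ω]))
      ((measurable_const.add (hHmeas.mul hZmeas)).log).aestronglyMeasurable,
    key,
    ← integral_eq_lintegral_of_nonneg_ae
      ((ae_restrict_iff' measurableSet_Ioi).2 (Filter.Eventually.of_forall hGnn))
      hGaem.aestronglyMeasurable]
end
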